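/- arXiv:1210.1351 — 3 statements merged into one kernel-verified Lean document; each statement's English description precedes it below -/
import Mathlib

section
/- Let Π_q denote the cone of real positive semidefinite symmetric q×q matrices. A continuous function φ : Π_q → ℂ with φ(0) = 1 satisfies the product formula φ(a)·φ(b) = φ(√(a² + b²)) for all a, b ∈ Π_q if and only if there exists a complex symmetric q×q matrix B such that φ(a) = exp(−⟨a², B⟩) for all a ∈ Π_q, where ⟨x, y⟩ = tr(xy) extended bilinearly. -/
open Matrix Complex

open scoped ComplexOrder in
/-- The positive semidefinite square root of a positive semidefinite matrix, as defined in
the older Mathlib (removed since). -/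
noncomputable def Matrix.PosSemidef.sqrt {n : Type*} {𝕜 : Type*} [Fintype n] [RCLike 𝕜]
    [DecidableEq n] {A : Matrix n n 𝕜} (hA : A.PosSemidef) : Matrix n n 𝕜 :=
  hA.1.eigenvectorUnitary.1 * diagonal ((↑) ∘ (√·) ∘ hA.1.eigenvalues) *
    (star hA.1.eigenvectorUnitary : Matrix n n 𝕜)

lemma exp_ray_inj {α β : ℂ} (h : ∀ t : ℝ, 0 ≤ t → Complex.exp (α * t) = Complex.exp (β * t)) :
    α = β := by
  by_contra hne
  set γ : ℂ := α - β with hγ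
  have hγ0 : γ ≠ 0 := sub_ne_zero.2 hne
  set t : ℝ := Real.pi / ‖γ‖ with ht
  have htpos : 0 < t := div_pos Real.pi_pos (norm_pos_iff.2 hγ0)
  have h1 : Complex.exp (γ * t) = 1 := by
    have := h t htpos.le
    rw [hγ, sub_mul, Complex.exp_sub, this, div_self (Complex.exp_ne_zero _)]
  obtain ⟨n, hn⟩ := Complex.exp_eq_one_iff.1 h1
  have hnorm : ‖γ * (t:ℂ)‖ = Real.pi := by
    rw [norm_mul, Complex.norm_real, Real.norm_eq_abs, _root_.abs_of_nonneg htpos.le, ht,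
      mul_div_cancel₀ _ (norm_ne_zero_iff.2 hγ0)]
  rw [hn] at hnorm
  have h2 : |(n:ℝ)| * (2 * Real.pi) = Real.pi := by
    have e : ‖(n:ℂ) * (2 * (Real.pi:ℂ) * Complex.I)‖ = |(n:ℝ)| * (2*Real.pi) := by
      simp [norm_mul, Complex.norm_real, _root_.abs_of_nonneg Real.pi_pos.le]
    rw [e] at hnorm
    exact hnorm
  rcases eq_or_ne n 0 with rfl | hn0
  · simp at h2; nlinarith [Real.pi_pos]
  · have : (1:ℝ) ≤ |(n:ℝ)| := by
      have := Int.one_le_abs hn0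
      calc (1:ℝ) = ((1:ℤ):ℝ) := by norm_num
      _ ≤ ((|n|:ℤ):ℝ) := by exact_mod_cast this
      _ = |(n:ℝ)| := by push_cast; ring
    nlinarith [Real.pi_pos]

lemma cauchy1D {h : ℝ → ℂ} (hc : Continuous h) (h0 : h 0 = 1)
    (hm : ∀ t u : ℝ, 0 ≤ t → 0 ≤ u → h (t + u) = h t * h u) :
    ∃ c : ℂ, ∀ t : ℝ, 0 ≤ t → h t = Complex.exp (c * t) := by
  set H : ℝ → ℂ := fun x => ∫ s in (0:ℝ)..x, h s with hHdef
  have hint : ∀ a b : ℝ, IntervalIntegrable h MeasureTheory.volume a b :=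
    fun a b => hc.intervalIntegrable a b
  have HD : ∀ x : ℝ, HasDerivAt H (h x) x :=
    fun x => (hc.integral_hasStrictDerivAt 0 x).hasDerivAt
  have Hcont : Continuous H := continuous_iff_continuousAt.2 fun x => (HD x).continuousAt
  obtain ⟨δ, hδpos, hδ⟩ : ∃ δ > (0:ℝ), ∀ s ∈ Set.Icc (0:ℝ) δ, ‖h s - 1‖ ≤ 1/2 := by
    obtain ⟨ε, hε, hball⟩ := Metric.continuousAt_iff.1 hc.continuousAt (1/2) (by norm_num)
    refine ⟨ε/2, by positivity, fun s hs => ?_⟩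
    have hd : dist s 0 < ε := by
      rw [Real.dist_eq, sub_zero, _root_.abs_of_nonneg hs.1]; linarith [hs.2]
    have := hball hd
    rw [h0, dist_eq_norm] at this
    exact this.le
  have HδZ : H δ ≠ 0 := by
    have key : ‖H δ - δ‖ ≤ (1/2) * |δ - 0| := by
      have e : H δ - δ = ∫ s in (0:ℝ)..δ, (h s - 1) := by
        rw [intervalIntegral.integral_sub (hint 0 δ) intervalIntegrable_const]
        simp [hHdef]
      rw [e]
      apply intervalIntegral.norm_integral_le_of_norm_le_const
      intro x hx
      rw [Set.uIoc_of_le hδpos.le] at hx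
      exact hδ x ⟨hx.1.le, hx.2⟩
    intro hz
    rw [hz, zero_sub, norm_neg, Complex.norm_real, Real.norm_eq_abs,
      _root_.abs_of_nonneg hδpos.le, sub_zero, _root_.abs_of_nonneg hδpos.le] at key
    linarith
  have hkey : ∀ u : ℝ, 0 ≤ u → H (u + δ) - H u = h u * H δ := by
    intro u hu
    have h1 : H (u + δ) - H u = ∫ s in u..(u+δ), h s := by
      rw [hHdef]
      have := intervalIntegral.integral_add_adjacent_intervals (hint 0 u) (hint u (u+δ))
      simp only [] at this ⊢
      linear_combination (norm := ring_nf) - this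
    have h2 : (∫ s in u..(u+δ), h s) = ∫ x in (0:ℝ)..δ, h (x + u) := by
      rw [intervalIntegral.integral_comp_add_right h u, zero_add, add_comm δ u]
    have h3 : (∫ x in (0:ℝ)..δ, h (x + u)) = ∫ x in (0:ℝ)..δ, h u * h x := by
      apply intervalIntegral.integral_congr
      intro x hx
      rw [Set.uIcc_of_le hδpos.le] at hx
      show h (x + u) = h u * h x
      rw [hm x u hx.1 hu, mul_comm]
    rw [h1, h2, h3, intervalIntegral.integral_const_mul]
  set c : ℂ := (h δ - 1) * (H δ)⁻¹ with hcdef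
  set F : ℝ → ℂ := fun u => (H (u + δ) - H u) * (H δ)⁻¹ with hFdef
  have hF : ∀ u, 0 ≤ u → F u = h u := by
    intro u hu
    rw [hFdef]
    simp only []
    rw [hkey u hu, mul_assoc, mul_inv_cancel₀ HδZ, mul_one]
  have FD : ∀ u : ℝ, HasDerivAt F ((h (u+δ) - h u) * (H δ)⁻¹) u := by
    intro u
    have d1 : HasDerivAt (fun v : ℝ => H (v + δ)) (h (u + δ)) u := by
      exact HasDerivAt.comp_add_const u δ (HD (u+δ))
    exact (d1.sub (HD u)).mul_const _
  set g : ℝ → ℂ := fun u => Complex.exp (-(c * u)) * F u with hgdef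
  have gD : ∀ u : ℝ, 0 ≤ u → HasDerivAt g 0 u := by
    intro u hu
    have e1 : HasDerivAt (fun v : ℝ => Complex.exp (-(c * v))) (-c * Complex.exp (-(c*u))) u := by
      have inner : HasDerivAt (fun v : ℝ => -(c * (v:ℂ))) (-c) u := by
        have : HasDerivAt (fun v : ℝ => (v:ℂ)) 1 u := Complex.ofRealCLM.hasDerivAt
        have h' := (this.const_mul c).neg
        rw [mul_one] at h'
        exact h'
      simpa [mul_comm] using inner.cexp
    have := e1.mul (FD u)
    refine this.congr_deriv ?_
    rw [hF u hu]
    have e2 : h (u + δ) = h u * h δ := hm u δ hu hδpos.le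
    rw [e2]
    rw [hcdef]
    ring
  refine ⟨c, fun t ht => ?_⟩
  have gconst : g t = g 0 := by
    rcases eq_or_lt_of_le ht with rfl | ht'
    · rfl
    · have gcont : ContinuousOn g (Set.Icc 0 t) := by
        apply Continuous.continuousOn
        apply Continuous.mul
        · exact (Complex.continuous_exp.comp ((continuous_const.mul Complex.continuous_ofReal).neg))
        · exact ((Hcont.comp (continuous_id.add continuous_const)).sub Hcont).mul continuous_const
      exact constant_of_has_deriv_right_zero gcont
        (fun x hx => (gD x hx.1).hasDerivWithinAt) t ⟨ht, le_refl t⟩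
  have g0 : g 0 = 1 := by
    rw [hgdef]
    simp only []
    rw [hF 0 le_rfl, h0]
    simp
  rw [g0] at gconst
  have : Complex.exp (-(c * t)) * h t = 1 := by
    rw [← hF t ht]; exact gconst
  calc h t = Complex.exp (c*t) * Complex.exp (-(c*t)) * h t := by
        rw [← Complex.exp_add]; simp
    _ = Complex.exp (c*t) * 1 := by rw [mul_assoc, this]
    _ = Complex.exp (c*t) := mul_one _

variable {q : ℕ}

open scoped MatrixOrder in
lemma psd_sqrt_eq_cfc {A : Matrix (Fin q) (Fin q) ℝ} (hA : A.PosSemidef) :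
    hA.sqrt = CFC.sqrt A := by
  rw [CFC.sqrt_eq_real_sqrt A hA.nonneg, cfcₙ_eq_cfc, hA.1.cfc_eq]
  simp only [IsHermitian.cfc, Unitary.conjStarAlgAut_apply, Matrix.PosSemidef.sqrt]

open scoped MatrixOrder in
lemma Matrix.PosSemidef.posSemidef_sqrt {A : Matrix (Fin q) (Fin q) ℝ} (hA : A.PosSemidef) :
    hA.sqrt.PosSemidef := by
  rw [psd_sqrt_eq_cfc]; exact (CFC.sqrt_nonneg A).posSemidef

open scoped MatrixOrder in
lemma Matrix.PosSemidef.sq_sqrt {A : Matrix (Fin q) (Fin q) ℝ} (hA : A.PosSemidef) :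
    hA.sqrt ^ 2 = A := by
  rw [psd_sqrt_eq_cfc]; exact CFC.sq_sqrt A hA.nonneg

open scoped MatrixOrder in
lemma Matrix.PosSemidef.eq_sqrt_of_sq_eq {A : Matrix (Fin q) (Fin q) ℝ} (hA : A.PosSemidef)
    {B : Matrix (Fin q) (Fin q) ℝ} (hB : B.PosSemidef) (hAB : A ^ 2 = B) : A = hB.sqrt := by
  rw [psd_sqrt_eq_cfc, ← hAB]; exact (CFC.sqrt_sq A hA.nonneg).symm

lemma Matrix.PosSemidef.sqrt_sq {A : Matrix (Fin q) (Fin q) ℝ} (hA : A.PosSemidef) :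
    (hA.pow 2).sqrt = A :=
  (hA.eq_sqrt_of_sq_eq (hA.pow 2) rfl).symm

/-- symmetric part -/
noncomputable def symPart (x : Matrix (Fin q) (Fin q) ℝ) : Matrix (Fin q) (Fin q) ℝ :=
  (1/2 : ℝ) • (x + xᵀ)

noncomputable def muFn (x : Matrix (Fin q) (Fin q) ℝ) : ℝ := ∑ i, ∑ j, |x i j|

lemma symPart_transpose (x : Matrix (Fin q) (Fin q) ℝ) : (symPart x)ᵀ = symPart x := by
  simp [symPart, transpose_add, transpose_smul, add_comm]

lemma symPart_of_transpose (x : Matrix (Fin q) (Fin q) ℝ) : symPart xᵀ = symPart x := by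
  simp [symPart, add_comm]

lemma symPart_symm {x : Matrix (Fin q) (Fin q) ℝ} (hx : xᵀ = x) : symPart x = x := by
  rw [symPart, hx]; module

lemma symPart_add (x y : Matrix (Fin q) (Fin q) ℝ) :
    symPart (x + y) = symPart x + symPart y := by
  simp only [symPart, transpose_add]; module

lemma symPart_smul (r : ℝ) (x : Matrix (Fin q) (Fin q) ℝ) :
    symPart (r • x) = r • symPart x := by
  simp only [symPart, transpose_smul]; module

lemma muFn_nonneg (x : Matrix (Fin q) (Fin q) ℝ) : 0 ≤ muFn x :=
  Finset.sum_nonneg fun i _ => Finset.sum_nonneg fun j _ => abs_nonneg _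

lemma psd_smul {a : Matrix (Fin q) (Fin q) ℝ} (ha : a.PosSemidef) {r : ℝ} (hr : 0 ≤ r) :
    (r • a).PosSemidef := by
  refine Matrix.PosSemidef.of_dotProduct_mulVec_nonneg ?_ ?_
  · show (r • a)ᴴ = r • a
    rw [conjTranspose_smul, ha.1]
    norm_num
  · intro x
    have h2 := ha.dotProduct_mulVec_nonneg x
    rw [smul_mulVec, dotProduct_smul, smul_eq_mul]
    exact mul_nonneg hr h2

lemma psd_transpose_eq {s : Matrix (Fin q) (Fin q) ℝ} (hs : s.PosSemidef) : sᵀ = s := by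
  have h1 : sᴴ = sᵀ := by ext i j; simp [conjTranspose_apply]
  rw [← h1, hs.1]

/-- shift a symmetric matrix to make it PSD -/
lemma psd_shift {y : Matrix (Fin q) (Fin q) ℝ} (hy : yᵀ = y) :
    (y + muFn y • 1).PosSemidef := by
  have hsym : ∀ i j, y j i = y i j := fun i j => by
    conv_rhs => rw [← hy]
    rfl
  refine Matrix.PosSemidef.of_dotProduct_mulVec_nonneg ?_ ?_
  · show (y + muFn y • 1)ᴴ = _
    have h1 : (y + muFn y • 1)ᴴ = (y + muFn y • 1)ᵀ := by ext i j; simp [conjTranspose_apply]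
    rw [h1, transpose_add, hy, transpose_smul, transpose_one]
  · intro x
    have hxx : ∀ k, x k ^ 2 ≤ x ⬝ᵥ x := by
      intro k
      have : x ⬝ᵥ x = ∑ i, x i ^ 2 := by simp [dotProduct, sq]
      rw [this]
      exact Finset.single_le_sum (fun i _ => sq_nonneg (x i)) (Finset.mem_univ k)
    have term : ∀ i j, -(|y i j| * (x ⬝ᵥ x)) ≤ x i * (y i j * x j) := by
      intro i j
      have h1 : |x i * (y i j * x j)| ≤ |y i j| * (x ⬝ᵥ x) := by
        rw [abs_mul, abs_mul]
        have h2 : |x i| * (|y i j| * |x j|) = |y i j| * (|x i| * |x j|) := by ring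
        rw [h2]
        apply mul_le_mul_of_nonneg_left _ (abs_nonneg _)
        have h3 : |x i| * |x j| ≤ (x i ^ 2 + x j ^ 2) / 2 := by
          nlinarith [sq_nonneg (|x i| - |x j|), _root_.sq_abs (x i), _root_.sq_abs (x j)]
        have h4 : (x i ^ 2 + x j ^ 2) / 2 ≤ x ⬝ᵥ x := by
          have := hxx i; have := hxx j; linarith
        linarith
      have := neg_abs_le (x i * (y i j * x j))
      linarith [(abs_le.1 h1).1]
    have expand : x ⬝ᵥ ((y + muFn y • 1) *ᵥ x)
        = (∑ i, ∑ j, x i * (y i j * x j)) + muFn y * (x ⬝ᵥ x) := by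
      rw [add_mulVec, dotProduct_add, smul_mulVec, one_mulVec, dotProduct_smul,
        smul_eq_mul]
      congr 1
      simp [dotProduct, mulVec, Finset.mul_sum]
    have star_eq : star x = x := by ext i; simp
    rw [star_eq, expand]
    have sum_bound : -(muFn y * (x ⬝ᵥ x)) ≤ ∑ i, ∑ j, x i * (y i j * x j) := by
      have : muFn y * (x ⬝ᵥ x) = ∑ i, ∑ j, |y i j| * (x ⬝ᵥ x) := by
        rw [muFn, Finset.sum_mul]
        congr 1; ext i; rw [Finset.sum_mul]
      rw [this, ← Finset.sum_neg_distrib]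
      apply Finset.sum_le_sum
      intro i _
      rw [← Finset.sum_neg_distrib]
      exact Finset.sum_le_sum fun j _ => term i j
    linarith

noncomputable def Lfun (D : Matrix (Fin q) (Fin q) ℝ → ℂ) (x : Matrix (Fin q) (Fin q) ℝ) : ℂ :=
  D (symPart x + muFn (symPart x) • 1) - D (muFn (symPart x) • 1)

lemma extension (D : Matrix (Fin q) (Fin q) ℝ → ℂ)
    (hadd : ∀ s t : Matrix (Fin q) (Fin q) ℝ,
      s.PosSemidef → t.PosSemidef → D (s + t) = D s + D t)
    (hsmul : ∀ s : Matrix (Fin q) (Fin q) ℝ, s.PosSemidef → ∀ r : ℝ, 0 ≤ r →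
      D (r • s) = (r : ℂ) * D s)
    (hzero : D 0 = 0) :
    ∃ B : Matrix (Fin q) (Fin q) ℂ, B.IsSymm ∧
      ∀ s : Matrix (Fin q) (Fin q) ℝ, s.PosSemidef →
        D s = -((s.map (Complex.ofReal)) * B).trace := by
  set L : Matrix (Fin q) (Fin q) ℝ → ℂ := Lfun D with hL
  have hone : (1 : Matrix (Fin q) (Fin q) ℝ).PosSemidef := Matrix.PosSemidef.one
  have hmu1 : ∀ x : Matrix (Fin q) (Fin q) ℝ, (muFn x • (1:Matrix (Fin q) (Fin q) ℝ)).PosSemidef :=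
    fun x => psd_smul hone (muFn_nonneg x)
  have hshift : ∀ x : Matrix (Fin q) (Fin q) ℝ,
      (symPart x + muFn (symPart x) • 1).PosSemidef :=
    fun x => psd_shift (symPart_transpose x)
  -- well-definedness
  have welldef : ∀ p m p' m' : Matrix (Fin q) (Fin q) ℝ,
      p.PosSemidef → m.PosSemidef → p'.PosSemidef → m'.PosSemidef →
      p + m' = p' + m → D p - D m = D p' - D m' := by
    intro p m p' m' hp hm hp' hm' he
    have h1 : D (p + m') = D (p' + m) := by rw [he]
    rw [hadd p m' hp hm', hadd p' m hp' hm] at h1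
    linear_combination h1
  -- L s = D p - D m whenever symPart x = p - m
  have L_eq : ∀ (x p m : Matrix (Fin q) (Fin q) ℝ), p.PosSemidef → m.PosSemidef →
      symPart x = p - m → L x = D p - D m := by
    intro x p m hp hm he
    apply welldef _ _ _ _ (hshift x) (hmu1 (symPart x)) hp hm
    rw [eq_sub_iff_add_eq] at he
    rw [← he]
    abel
  have L_psd : ∀ s : Matrix (Fin q) (Fin q) ℝ, s.PosSemidef → L s = D s := by
    intro s hs
    have := L_eq s s 0 hs Matrix.PosSemidef.zero (by rw [symPart_symm (psd_transpose_eq hs)]; abel)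
    rwa [hzero, sub_zero] at this
  have L_add : ∀ x y : Matrix (Fin q) (Fin q) ℝ, L (x + y) = L x + L y := by
    intro x y
    have h1 := L_eq (x + y)
      ((symPart x + muFn (symPart x) • 1) + (symPart y + muFn (symPart y) • 1))
      (muFn (symPart x) • 1 + muFn (symPart y) • 1)
      ((hshift x).add (hshift y)) ((hmu1 (symPart x)).add (hmu1 (symPart y)))
      (by rw [symPart_add]; abel)
    rw [h1, hadd _ _ (hshift x) (hshift y), hadd _ _ (hmu1 (symPart x)) (hmu1 (symPart y))]
    rw [hL]
    unfold Lfun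
    ring
  have L_smul_nonneg : ∀ (r : ℝ), 0 ≤ r → ∀ x : Matrix (Fin q) (Fin q) ℝ,
      L (r • x) = (r : ℂ) * L x := by
    intro r hr x
    have h1 := L_eq (r • x) (r • (symPart x + muFn (symPart x) • 1)) (r • (muFn (symPart x) • 1))
      (psd_smul (hshift x) hr) (psd_smul (hmu1 (symPart x)) hr)
      (by rw [symPart_smul]; rw [smul_add]; abel)
    rw [h1, hsmul _ (hshift x) r hr, hsmul _ (hmu1 (symPart x)) r hr]
    rw [hL]; unfold Lfun; ring
  have L_zero : L 0 = 0 := by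
    have := L_eq 0 0 0 Matrix.PosSemidef.zero Matrix.PosSemidef.zero (by simp [symPart])
    rwa [hzero, sub_zero] at this
  have L_neg : ∀ x : Matrix (Fin q) (Fin q) ℝ, L (-x) = -L x := by
    intro x
    have := L_add x (-x)
    rw [add_neg_cancel, L_zero] at this
    linear_combination -this
  have L_smul : ∀ (r : ℝ) (x : Matrix (Fin q) (Fin q) ℝ), L (r • x) = (r : ℂ) * L x := by
    intro r x
    rcases le_or_gt 0 r with hr | hr
    · exact L_smul_nonneg r hr x
    · have h1 : r • x = -((-r) • x) := by rw [neg_smul, neg_neg]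
      rw [h1, L_neg, L_smul_nonneg (-r) (by linarith) x]
      push_cast
      ring
  -- the matrix B
  set B : Matrix (Fin q) (Fin q) ℂ :=
    Matrix.of (fun i j => - L (Matrix.single j i (1:ℝ))) with hB
  have L_transpose : ∀ x : Matrix (Fin q) (Fin q) ℝ, L xᵀ = L x := by
    intro x
    rw [hL]; unfold Lfun
    rw [symPart_of_transpose]
  have hsbT : ∀ i j : Fin q, (Matrix.single i j (1:ℝ))ᵀ = Matrix.single j i 1 := by
    intro i j
    ext a b
    simp only [Matrix.transpose_apply, Matrix.single, Matrix.of_apply]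
    by_cases h1 : i = b <;> by_cases h2 : j = a <;> simp [h1, h2]
  have hBsymm : B.IsSymm := by
    rw [Matrix.IsSymm]
    ext i j
    rw [Matrix.transpose_apply]
    show -L (Matrix.single i j (1:ℝ)) = -L (Matrix.single j i (1:ℝ))
    rw [← hsbT j i, L_transpose]
  -- trace formula
  have trace_eq : ∀ x : Matrix (Fin q) (Fin q) ℝ,
      -((x.map (Complex.ofReal)) * B).trace = L x := by
    intro x
    have expand : ((x.map (Complex.ofReal)) * B).trace
        = ∑ i, ∑ j, (x i j : ℂ) * B j i := by
      rw [Matrix.trace]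
      refine Finset.sum_congr rfl fun i _ => ?_
      rw [Matrix.diag_apply, Matrix.mul_apply]
      refine Finset.sum_congr rfl fun j _ => ?_
      rw [Matrix.map_apply]
    rw [expand]
    have hBval : ∀ i j, B j i = - L (Matrix.single i j (1:ℝ)) := by
      intro i j; rw [hB]; rfl
    have hx : x = ∑ i, ∑ j, (x i j) • Matrix.single i j (1:ℝ) := by
      conv_lhs => rw [Matrix.matrix_eq_sum_single x]
      refine Finset.sum_congr rfl fun i _ => Finset.sum_congr rfl fun j _ => ?_
      rw [Matrix.smul_single, smul_eq_mul, mul_one]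
    have Lsum : L x = ∑ i, ∑ j, (x i j : ℂ) * L (Matrix.single i j (1:ℝ)) := by
      conv_lhs => rw [hx]
      have Lhom : ∀ (s : Finset (Fin q × Fin q)) (f : Fin q × Fin q → Matrix (Fin q) (Fin q) ℝ),
        True := fun _ _ => trivial
      -- use AddMonoidHom
      let LH : Matrix (Fin q) (Fin q) ℝ →+ ℂ := AddMonoidHom.mk' L L_add
      have : ∀ y, L y = LH y := fun y => rfl
      rw [this, map_sum]
      refine Finset.sum_congr rfl fun i _ => ?_
      rw [map_sum]
      refine Finset.sum_congr rfl fun j _ => ?_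
      rw [← this, L_smul]
    rw [Lsum]
    rw [← Finset.sum_neg_distrib]
    refine Finset.sum_congr rfl fun i _ => ?_
    rw [← Finset.sum_neg_distrib]
    refine Finset.sum_congr rfl fun j _ => ?_
    rw [hBval i j]
    ring
  exact ⟨B, hBsymm, fun s hs => by rw [← L_psd s hs, ← trace_eq s]⟩

/-- A continuous function `φ` on the cone of real positive semidefinite
symmetric `q×q` matrices with `φ 0 = 1` satisfies the product formula
`φ a * φ b = φ (√(a² + b²))` iff there is a complex symmetric matrix `B` with
`φ a = exp (−⟨a², B⟩)`, where `⟨x, y⟩ = tr (x y)` extended ℂ-bilinearly. -/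
theorem stmt1 (q : ℕ) (φ : Matrix (Fin q) (Fin q) ℝ → ℂ)
    (hcont : ContinuousOn φ {a | a.PosSemidef}) (h0 : φ 0 = 1) :
    (∀ (a b : Matrix (Fin q) (Fin q) ℝ) (ha : a.PosSemidef) (hb : b.PosSemidef),
        φ a * φ b = φ ((ha.pow 2).add (hb.pow 2)).sqrt) ↔
      ∃ B : Matrix (Fin q) (Fin q) ℂ, B.IsSymm ∧
        ∀ a : Matrix (Fin q) (Fin q) ℝ, a.PosSemidef →
          φ a = Complex.exp (-((a ^ 2).map (Complex.ofReal) * B).trace) := by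
  constructor
  · intro hmul
    classical
    have ray : ∀ a : Matrix (Fin q) (Fin q) ℝ, a.PosSemidef →
        ∃ c : ℂ, ∀ t : ℝ, 0 ≤ t → φ (Real.sqrt t • a) = Complex.exp (c * t) := by
      intro a ha
      apply cauchy1D
      · exact hcont.comp_continuous (Real.continuous_sqrt.smul continuous_const)
          (fun t => psd_smul ha (Real.sqrt_nonneg t))
      · rw [Real.sqrt_zero, zero_smul]; exact h0
      · intro t u ht hu
        have hta := psd_smul ha (Real.sqrt_nonneg t)
        have hua := psd_smul ha (Real.sqrt_nonneg u)
        have key := hmul _ _ hta hua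
        have hsq : (Real.sqrt (t+u) • a) ^ 2 = (Real.sqrt t • a)^2 + (Real.sqrt u • a)^2 := by
          rw [smul_pow, smul_pow, smul_pow, Real.sq_sqrt ht, Real.sq_sqrt hu,
            Real.sq_sqrt (by linarith : (0:ℝ) ≤ t + u), ← add_smul]
        have e3 := (psd_smul ha (Real.sqrt_nonneg (t+u))).eq_sqrt_of_sq_eq
          ((hta.pow 2).add (hua.pow 2)) hsq
        rw [← e3] at key
        exact key.symm
    choose! c hc using ray
    have hφe : ∀ a, a.PosSemidef → φ a = Complex.exp (c a) := by
      intro a ha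
      have := hc a ha 1 zero_le_one
      rw [Real.sqrt_one, one_smul] at this
      rw [this]
      norm_num
    have sqrt_congr : ∀ {X Y : Matrix (Fin q) (Fin q) ℝ}
        (hX : X.PosSemidef) (hY : Y.PosSemidef), X = Y → hX.sqrt = hY.sqrt := by
      rintro X Y hX hY rfl; rfl
    have c_add : ∀ a b (ha : a.PosSemidef) (hb : b.PosSemidef),
        c (((ha.pow 2).add (hb.pow 2)).sqrt) = c a + c b := by
      intro a b ha hb
      have hdp := ((ha.pow 2).add (hb.pow 2)).posSemidef_sqrt
      apply exp_ray_inj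
      intro t ht
      have e1 := hc _ hdp t ht
      have hta := psd_smul ha (Real.sqrt_nonneg t)
      have htb := psd_smul hb (Real.sqrt_nonneg t)
      have e2 := hmul _ _ hta htb
      have hsq : (Real.sqrt t • ((ha.pow 2).add (hb.pow 2)).sqrt) ^ 2
          = (Real.sqrt t • a)^2 + (Real.sqrt t • b)^2 := by
        rw [smul_pow, smul_pow, smul_pow, Real.sq_sqrt ht,
          ((ha.pow 2).add (hb.pow 2)).sq_sqrt, smul_add]
      have e3 := (psd_smul hdp (Real.sqrt_nonneg t)).eq_sqrt_of_sq_eq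
        ((hta.pow 2).add (htb.pow 2)) hsq
      rw [← e3] at e2
      rw [hc a ha t ht, hc b hb t ht] at e2
      calc Complex.exp (c (((ha.pow 2).add (hb.pow 2)).sqrt) * t)
          = φ (Real.sqrt t • ((ha.pow 2).add (hb.pow 2)).sqrt) := e1.symm
        _ = Complex.exp (c a * t) * Complex.exp (c b * t) := e2.symm
        _ = Complex.exp ((c a + c b) * t) := by rw [← Complex.exp_add]; ring_nf
    have c_smul : ∀ a (ha : a.PosSemidef) (r : ℝ), 0 ≤ r →
        c (Real.sqrt r • a) = (r:ℂ) * c a := by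
      intro a ha r hr
      apply exp_ray_inj
      intro t ht
      have h1 := hc (Real.sqrt r • a) (psd_smul ha (Real.sqrt_nonneg r)) t ht
      have h2 : Real.sqrt t • (Real.sqrt r • a) = Real.sqrt (t * r) • a := by
        rw [smul_smul, ← Real.sqrt_mul ht]
      rw [h2, hc a ha (t*r) (mul_nonneg ht hr)] at h1
      rw [← h1]
      congr 1
      push_cast
      ring
    set D : Matrix (Fin q) (Fin q) ℝ → ℂ :=
      fun s => if hs : s.PosSemidef then c hs.sqrt else 0 with hD
    have Dval : ∀ (s : Matrix (Fin q) (Fin q) ℝ) (hs : s.PosSemidef), D s = c hs.sqrt :=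
      fun s hs => dif_pos hs
    have c_zero : c (0 : Matrix (Fin q) (Fin q) ℝ) = 0 := by
      apply exp_ray_inj (β := 0)
      intro t ht
      have := hc 0 Matrix.PosSemidef.zero t ht
      rw [smul_zero, h0] at this
      rw [← this, zero_mul, Complex.exp_zero]
    have sqrt_zero : ((Matrix.PosSemidef.zero :
        (0:Matrix (Fin q) (Fin q) ℝ).PosSemidef)).sqrt = 0 :=
      (Matrix.PosSemidef.zero.eq_sqrt_of_sq_eq Matrix.PosSemidef.zero (by simp)).symm
    have Dzero : D 0 = 0 := by
      rw [Dval 0 Matrix.PosSemidef.zero, sqrt_zero, c_zero]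
    have Dadd : ∀ s t : Matrix (Fin q) (Fin q) ℝ, s.PosSemidef → t.PosSemidef →
        D (s+t) = D s + D t := by
      intro s t hs ht
      rw [Dval _ (hs.add ht), Dval _ hs, Dval _ ht]
      have h1 := c_add hs.sqrt ht.sqrt hs.posSemidef_sqrt ht.posSemidef_sqrt
      have h2 : (((hs.posSemidef_sqrt.pow 2).add (ht.posSemidef_sqrt.pow 2))).sqrt
          = (hs.add ht).sqrt := by
        apply sqrt_congr
        rw [hs.sq_sqrt, ht.sq_sqrt]
      rw [h2] at h1
      exact h1
    have Dsmul : ∀ s : Matrix (Fin q) (Fin q) ℝ, s.PosSemidef → ∀ r : ℝ, 0 ≤ r →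
        D (r • s) = (r:ℂ) * D s := by
      intro s hs r hr
      rw [Dval _ (psd_smul hs hr), Dval _ hs]
      have h2 : (psd_smul hs hr).sqrt = Real.sqrt r • hs.sqrt := by
        symm
        apply Matrix.PosSemidef.eq_sqrt_of_sq_eq
          (psd_smul hs.posSemidef_sqrt (Real.sqrt_nonneg r))
        rw [smul_pow, Real.sq_sqrt hr, hs.sq_sqrt]
      rw [h2, c_smul hs.sqrt hs.posSemidef_sqrt r hr]
    obtain ⟨B, hBsymm, hBeq⟩ := extension D Dadd Dsmul Dzero
    refine ⟨B, hBsymm, fun a ha => ?_⟩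
    have h1 : φ a = Complex.exp (c a) := hφe a ha
    have h2 : D (a^2) = c a := by
      rw [Dval _ (ha.pow 2)]
      congr 1
      exact ha.sqrt_sq
    rw [h1, ← h2, hBeq _ (ha.pow 2)]
  · rintro ⟨B, hBsymm, hB⟩ a b ha hb
    rw [hB a ha, hB b hb, hB _ (((ha.pow 2).add (hb.pow 2)).posSemidef_sqrt),
      ← Complex.exp_add]
    congr 1
    have hsq : (((ha.pow 2).add (hb.pow 2)).sqrt) ^ 2 = a^2 + b^2 :=
      ((ha.pow 2).add (hb.pow 2)).sq_sqrt
    rw [hsq]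
    have hmap : ((a^2 + b^2).map (Complex.ofReal))
        = (a^2).map Complex.ofReal + (b^2).map Complex.ofReal := by
      ext i j
      simp [Matrix.map_apply, Matrix.add_apply]
    rw [hmap, Matrix.add_mul, Matrix.trace_add]
    ring
end

section
/- Let ψ : Π_q → ℂ be a continuous function on the cone of real positive semidefinite q×q matrices satisfying ψ(a)ψ(b) = ψ(a+b) for all a, b ∈ Π_q and ψ(0) = 1. Then ψ(a) ≠ 0 for all a ∈ Π_q, and ψ extends uniquely to a continuous function on the space H_q of all real symmetric q×q matrices satisfying the same multiplicative functional equation, via ψ(d − cI) := ψ(d)/ψ(cI) for d ∈ Π_q, c ≥ 0. -/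
open Matrix

namespace Stmt2Aux
variable {q : ℕ}

noncomputable def cval (x : Matrix (Fin q) (Fin q) ℝ) : ℝ := ∑ i, ∑ j, |x i j|

lemma cval_nonneg (x : Matrix (Fin q) (Fin q) ℝ) : 0 ≤ cval x :=
  Finset.sum_nonneg fun _ _ => Finset.sum_nonneg fun _ _ => abs_nonneg _

lemma cval_cont : Continuous (cval (q := q)) := by
  unfold cval
  exact continuous_finset_sum _ fun i _ => continuous_finset_sum _ fun j _ =>
    ((continuous_apply j).comp (continuous_apply i)).abs

lemma smul_psd {c : ℝ} (hc : 0 ≤ c) {M : Matrix (Fin q) (Fin q) ℝ} (hM : M.PosSemidef) :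
    (c • M).PosSemidef := by
  refine posSemidef_iff_dotProduct_mulVec.mpr ⟨?_, fun v => ?_⟩
  · unfold Matrix.IsHermitian
    rw [conjTranspose_smul, hM.1]
    simp
  · rw [smul_mulVec, dotProduct_smul, smul_eq_mul]
    exact mul_nonneg hc (hM.dotProduct_mulVec_nonneg v)

lemma smul_one_psd {c : ℝ} (hc : 0 ≤ c) : (c • (1 : Matrix (Fin q) (Fin q) ℝ)).PosSemidef :=
  smul_psd hc Matrix.PosSemidef.one

lemma add_cval_psd {x : Matrix (Fin q) (Fin q) ℝ} (hx : x.IsHermitian) :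
    (x + cval x • 1).PosSemidef := by
  refine posSemidef_iff_dotProduct_mulVec.mpr ⟨hx.add (smul_one_psd (cval_nonneg x)).1, fun v => ?_⟩
  simp only [star_trivial]
  rw [add_mulVec, dotProduct_add, smul_mulVec, one_mulVec, dotProduct_smul, smul_eq_mul]
  have hM : ∀ i, v i * v i ≤ v ⬝ᵥ v := by
    intro i
    unfold dotProduct
    exact Finset.single_le_sum (f := fun j => v j * v j) (fun j _ => mul_self_nonneg _)
      (Finset.mem_univ i)
  have hMnn : 0 ≤ v ⬝ᵥ v := Finset.sum_nonneg fun i _ => mul_self_nonneg _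
  have key : ∀ i j, -( |x i j| * (v ⬝ᵥ v)) ≤ v i * (x i j * v j) := by
    intro i j
    nlinarith [hM i, hM j, abs_nonneg (x i j), le_abs_self (x i j), neg_abs_le (x i j),
      sq_nonneg (v i + v j), sq_nonneg (v i - v j), hMnn]
  have h1 : v ⬝ᵥ (x *ᵥ v) = ∑ i, ∑ j, v i * (x i j * v j) := by
    simp [dotProduct, mulVec, Finset.mul_sum]
  have h2 : cval x * (v ⬝ᵥ v) = ∑ i, ∑ j, |x i j| * (v ⬝ᵥ v) := by
    simp [cval, Finset.sum_mul]
  rw [h1, h2, ← Finset.sum_add_distrib]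
  refine Finset.sum_nonneg fun i _ => ?_
  rw [← Finset.sum_add_distrib]
  refine Finset.sum_nonneg fun j _ => ?_
  linarith [key i j]

end Stmt2Aux

open Stmt2Aux

/-- A continuous function `ψ` on the cone of real positive semidefinite
`q×q` matrices with `ψ 0 = 1` and `ψ a * ψ b = ψ (a + b)` is nowhere zero on the cone,
and extends uniquely to a continuous multiplicative function `Ψ` on the space of all real
symmetric `q×q` matrices, via `Ψ (d − c•I) = ψ d / ψ (c•I)` for `d` psd and `c ≥ 0`. -/
theorem stmt2 (q : ℕ) (ψ : Matrix (Fin q) (Fin q) ℝ → ℂ)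
    (hcont : ContinuousOn ψ {a | a.PosSemidef}) (h0 : ψ 0 = 1)
    (hmul : ∀ a b : Matrix (Fin q) (Fin q) ℝ,
      a.PosSemidef → b.PosSemidef → ψ a * ψ b = ψ (a + b)) :
    (∀ a : Matrix (Fin q) (Fin q) ℝ, a.PosSemidef → ψ a ≠ 0) ∧
      ∃! Ψ : {x : Matrix (Fin q) (Fin q) ℝ // x.IsHermitian} → ℂ,
        Continuous Ψ ∧
        (∀ x y : {x : Matrix (Fin q) (Fin q) ℝ // x.IsHermitian},
          Ψ x * Ψ y = Ψ ⟨x.1 + y.1, x.2.add y.2⟩) ∧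
        (∀ (a : Matrix (Fin q) (Fin q) ℝ) (ha : a.PosSemidef),
          Ψ ⟨a, ha.isHermitian⟩ = ψ a) ∧
        (∀ (d : Matrix (Fin q) (Fin q) ℝ) (hd : d.PosSemidef) (c : ℝ), 0 ≤ c →
          Ψ ⟨d - c • (1 : Matrix (Fin q) (Fin q) ℝ),
              hd.isHermitian.sub (by simp [Matrix.IsHermitian, Matrix.conjTranspose_smul])⟩
            = ψ d / ψ (c • (1 : Matrix (Fin q) (Fin q) ℝ))) := by
  -- Part 1: nonvanishing
  have hne : ∀ a : Matrix (Fin q) (Fin q) ℝ, a.PosSemidef → ψ a ≠ 0 := by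
    intro a ha hz
    have hpsd : ∀ n : ℕ, (((1:ℝ)/2)^n • a).PosSemidef :=
      fun n => smul_psd (by positivity) ha
    have hzero : ∀ n : ℕ, ψ (((1:ℝ)/2)^n • a) = 0 := by
      intro n; induction n with
      | zero => simpa using hz
      | succ n ih =>
        have h := hmul (((1:ℝ)/2)^(n+1) • a) (((1:ℝ)/2)^(n+1) • a) (hpsd _) (hpsd _)
        have heq : ((1:ℝ)/2)^(n+1) • a + ((1:ℝ)/2)^(n+1) • a = ((1:ℝ)/2)^n • a := by
          rw [← add_smul]; norm_num; ring_nf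
        rw [heq, ih] at h
        exact mul_self_eq_zero.mp h
    have ht : Filter.Tendsto (fun n : ℕ => ((1:ℝ)/2)^n • a) Filter.atTop (nhds 0) := by
      have h2 : Filter.Tendsto (fun n : ℕ => ((1:ℝ)/2)^n) Filter.atTop (nhds 0) :=
        tendsto_pow_atTop_nhds_zero_of_lt_one (by norm_num) (by norm_num)
      simpa using h2.smul_const a
    have hc0 : ContinuousWithinAt ψ {a | a.PosSemidef} 0 := hcont 0 Matrix.PosSemidef.zero
    have hlim : Filter.Tendsto (fun n : ℕ => ψ (((1:ℝ)/2)^n • a)) Filter.atTop (nhds (ψ 0)) :=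
      hc0.tendsto.comp (tendsto_nhdsWithin_of_tendsto_nhds_of_eventually_within _ ht
        (Filter.Eventually.of_forall fun n => hpsd n))
    have hfun : (fun n : ℕ => ψ (((1:ℝ)/2)^n • a)) = fun _ => (0:ℂ) := funext hzero
    rw [hfun] at hlim
    have : ψ 0 = 0 := tendsto_nhds_unique hlim tendsto_const_nhds
    rw [h0] at this
    exact one_ne_zero this
  refine ⟨hne, ?_⟩
  -- ratio independence
  have hrat : ∀ (x : Matrix (Fin q) (Fin q) ℝ) (c₁ c₂ : ℝ), 0 ≤ c₁ → 0 ≤ c₂ →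
      (x + c₁ • 1).PosSemidef → (x + c₂ • 1).PosSemidef →
      ψ (x + c₁ • 1) * ψ (c₂ • 1) = ψ (x + c₂ • 1) * ψ (c₁ • 1) := by
    intro x c₁ c₂ h1 h2 hp1 hp2
    rw [hmul _ _ hp1 (smul_one_psd h2), hmul _ _ hp2 (smul_one_psd h1)]
    rw [show x + c₁ • (1 : Matrix (Fin q) (Fin q) ℝ) + c₂ • 1
        = x + c₂ • 1 + c₁ • 1 by abel]
  have hform : ∀ (x : Matrix (Fin q) (Fin q) ℝ) (hx : x.IsHermitian) (c : ℝ), 0 ≤ c →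
      (x + c • 1).PosSemidef →
      ψ (x + cval x • 1) / ψ (cval x • 1) = ψ (x + c • 1) / ψ (c • 1) := by
    intro x hx c hc hp
    rw [div_eq_div_iff (hne _ (smul_one_psd (cval_nonneg x))) (hne _ (smul_one_psd hc))]
    exact hrat x (cval x) c (cval_nonneg x) hc (add_cval_psd hx) hp
  refine ⟨fun x => ψ (x.1 + cval x.1 • 1) / ψ (cval x.1 • 1), ⟨?_, ?_, ?_, ?_⟩, ?_⟩
  · -- continuity
    have gcont : Continuous fun x : {x : Matrix (Fin q) (Fin q) ℝ // x.IsHermitian} =>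
        x.1 + cval x.1 • (1 : Matrix (Fin q) (Fin q) ℝ) :=
      continuous_subtype_val.add ((cval_cont.comp continuous_subtype_val).smul continuous_const)
    have hcont1 : Continuous fun x : {x : Matrix (Fin q) (Fin q) ℝ // x.IsHermitian} =>
        ψ (x.1 + cval x.1 • 1) :=
      hcont.comp_continuous gcont (fun x => add_cval_psd x.2)
    have hcont2 : Continuous fun x : {x : Matrix (Fin q) (Fin q) ℝ // x.IsHermitian} =>
        ψ (cval x.1 • (1 : Matrix (Fin q) (Fin q) ℝ)) :=
      hcont.comp_continuous
        ((cval_cont.comp continuous_subtype_val).smul continuous_const)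
        (fun x => smul_one_psd (cval_nonneg x.1))
    exact hcont1.div hcont2 (fun x => hne _ (smul_one_psd (cval_nonneg x.1)))
  · -- multiplicativity
    intro x y
    set c₁ := cval x.1 with hc1
    set c₂ := cval y.1 with hc2
    rw [div_mul_div_comm]
    rw [hmul _ _ (add_cval_psd x.2) (add_cval_psd y.2),
        hmul _ _ (smul_one_psd (cval_nonneg x.1)) (smul_one_psd (cval_nonneg y.1))]
    have hsum : x.1 + c₁ • (1 : Matrix (Fin q) (Fin q) ℝ) + (y.1 + c₂ • 1)
        = (x.1 + y.1) + (c₁ + c₂) • 1 := by rw [add_smul]; abel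
    have hsum2 : c₁ • (1 : Matrix (Fin q) (Fin q) ℝ) + c₂ • 1 = (c₁ + c₂) • 1 := by
      rw [add_smul]
    rw [hsum, hsum2]
    refine (hform (x.1 + y.1) (x.2.add y.2) (c₁ + c₂)
      (add_nonneg (cval_nonneg _) (cval_nonneg _)) ?_).symm
    rw [← hsum]
    exact (add_cval_psd x.2).add (add_cval_psd y.2)
  · -- agreement on PSD
    intro a ha
    have := hform a ha.isHermitian 0 le_rfl (by simpa using ha)
    simp only [zero_smul, add_zero, h0, div_one] at this
    exact this
  · -- the extension formula
    intro d hd c hc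
    have hp : ((d - c • (1 : Matrix (Fin q) (Fin q) ℝ)) + c • 1).PosSemidef := by
      rw [sub_add_cancel]; exact hd
    have := hform (d - c • 1)
      (hd.isHermitian.sub (by simp [Matrix.IsHermitian, Matrix.conjTranspose_smul])) c hc hp
    rw [sub_add_cancel] at this
    exact this
  · -- uniqueness
    intro Ψ' ⟨hc', hm', hpsi', hext'⟩
    funext x
    have h1 := hext' (x.1 + cval x.1 • 1) (add_cval_psd x.2) (cval x.1) (cval_nonneg x.1)
    rw [← h1]
    congr 1
    exact Subtype.ext (by simp)
end

section
/- For q = 1 (the scalar case), the Bessel function J_μ(z) = Σ_{k≥0} (−1)^k z^k / ((μ)_k k!) satisfies lim_{μ→∞} J_μ(μ y) = e^{−y} uniformly for y in [0, ∞); moreover there is a constant C > 0 with |J_μ(μy) − e^{−y}| ≤ C/μ for all y ≥ 0 and μ ≥ 2. -/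
open Filter Topology

/-- The one-variable Bessel series `J_μ(z) = Σ_{k≥0} (−1)^k z^k / ((μ)_k k!)`. -/
noncomputable def besselJ1 (μ : ℝ) (z : ℝ) : ℝ :=
  ∑' k : ℕ, (-1 : ℝ) ^ k * z ^ k / ((ascPochhammer ℝ k).eval μ * (k.factorial : ℝ))

namespace BJ
open Set

noncomputable def poch (k : ℕ) (ν : ℝ) : ℝ := (ascPochhammer ℝ k).eval ν

lemma poch_zero (ν : ℝ) : poch 0 ν = 1 := by simp [poch]

lemma poch_succ_right (k : ℕ) (ν : ℝ) : poch (k+1) ν = poch k ν * (ν + k) := by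
  simp [poch, ascPochhammer_succ_right]

lemma poch_succ_left (k : ℕ) (ν : ℝ) : poch (k+1) ν = ν * poch k (ν + 1) := by
  simp [poch, ascPochhammer_succ_left, Polynomial.eval_comp]

lemma poch_pos {ν : ℝ} (hν : 0 < ν) (k : ℕ) : 0 < poch k ν :=
  ascPochhammer_pos k ν hν

lemma one_le_poch {ν : ℝ} (hν : 1 ≤ ν) (k : ℕ) : 1 ≤ poch k ν := by
  induction k with
  | zero => simp [poch_zero]
  | succ k ih =>
    rw [poch_succ_right]
    have h : (1:ℝ) ≤ ν + k := le_add_of_le_of_nonneg hν (Nat.cast_nonneg k)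
    nlinarith

lemma norm_term_le {ν : ℝ} (hν : 1 ≤ ν) (x : ℝ) (k : ℕ) :
    ‖(-1 : ℝ) ^ k * x ^ k / (poch k ν * (k.factorial : ℝ))‖ ≤ |x| ^ k / (k.factorial : ℝ) := by
  have h1 : (1:ℝ) ≤ poch k ν := one_le_poch hν k
  have h2 : (0:ℝ) < k.factorial := by positivity
  rw [Real.norm_eq_abs, abs_div, abs_mul, abs_mul, abs_pow, abs_pow, abs_neg, abs_one, one_pow,
    one_mul, abs_of_pos (lt_of_lt_of_le one_pos h1), abs_of_pos h2]
  apply div_le_div_of_nonneg_left (by positivity) h2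
  nlinarith

lemma summable_term {ν : ℝ} (hν : 1 ≤ ν) (x : ℝ) :
    Summable (fun k : ℕ => (-1 : ℝ) ^ k * x ^ k / (poch k ν * (k.factorial : ℝ))) := by
  apply Summable.of_norm_bounded (Real.summable_pow_div_factorial |x|)
  exact norm_term_le hν x

lemma besselJ1_def' (ν x : ℝ) :
    besselJ1 ν x = ∑' k : ℕ, (-1 : ℝ) ^ k * x ^ k / (poch k ν * (k.factorial : ℝ)) := rfl

lemma besselJ1_zero (ν : ℝ) : besselJ1 ν 0 = 1 := by
  rw [besselJ1_def']
  rw [tsum_eq_single 0 (fun k hk => by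
    rcases Nat.exists_eq_succ_of_ne_zero hk with ⟨j, rfl⟩
    simp [zero_pow])]
  simp [poch_zero]

lemma besselJ1_hasDerivAt {ν : ℝ} (hν : 1 ≤ ν) (x : ℝ) :
    HasDerivAt (besselJ1 ν) (-(besselJ1 (ν+1) x) / ν) x := by
  have hν0 : (0:ℝ) < ν := lt_of_lt_of_le one_pos hν
  set R : ℝ := |x| + 1 with hR
  have hR1 : (1:ℝ) ≤ R := le_add_of_nonneg_left (abs_nonneg x)
  have hRpos : (0:ℝ) < R := by positivity
  set g : ℕ → ℝ → ℝ := fun k y => (-1 : ℝ) ^ k * y ^ k / (poch k ν * (k.factorial : ℝ)) with hgdef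
  set g' : ℕ → ℝ → ℝ :=
    fun k y => (-1 : ℝ) ^ k * ((k:ℝ) * y ^ (k-1)) / (poch k ν * (k.factorial : ℝ)) with hg'def
  set u : ℕ → ℝ := fun k => (2*R) ^ k / (k.factorial : ℝ) with hudef
  have husum : Summable u := Real.summable_pow_div_factorial (2*R)
  have hderiv : ∀ k y, y ∈ Ioo (-R) R → HasDerivAt (g k) (g' k y) y := by
    intro k y _
    exact ((hasDerivAt_pow k y).const_mul ((-1:ℝ)^k)).div_const _
  have hbound : ∀ k y, y ∈ Ioo (-R) R → ‖g' k y‖ ≤ u k := by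
    intro k y hy
    have hyR : |y| ≤ R := by rw [abs_le]; exact ⟨hy.1.le, hy.2.le⟩
    have h1 : (1:ℝ) ≤ poch k ν := one_le_poch hν k
    have h2 : (0:ℝ) < (k.factorial:ℝ) := by positivity
    have hk2 : (k:ℝ) ≤ 2^k := by exact_mod_cast (Nat.lt_two_pow_self).le
    have hyk : |y| ^ (k-1) ≤ R ^ (k-1) := pow_le_pow_left₀ (abs_nonneg y) hyR _
    have hRk : R ^ (k-1) ≤ R ^ k := pow_le_pow_right₀ hR1 (Nat.sub_le k 1)
    have key : (k:ℝ) * |y| ^ (k-1) ≤ (2*R)^k := by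
      rw [mul_pow]
      calc (k:ℝ) * |y| ^ (k-1) ≤ 2^k * R^(k-1) :=
            mul_le_mul hk2 hyk (by positivity) (by positivity)
        _ ≤ 2^k * R^k := by
            have : (0:ℝ) < 2^k := by positivity
            nlinarith
    have : ‖g' k y‖ ≤ (k:ℝ) * |y| ^ (k-1) / (k.factorial : ℝ) := by
      rw [hg'def, Real.norm_eq_abs, abs_div, abs_mul, abs_mul, abs_pow, abs_neg, abs_one,
        one_pow, one_mul, abs_of_pos (by positivity : (0:ℝ) < poch k ν * (k.factorial:ℝ)),
        abs_of_nonneg (Nat.cast_nonneg k : (0:ℝ) ≤ (k:ℝ)), abs_pow]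
      apply div_le_div₀ (by positivity) le_rfl h2
      nlinarith [mul_nonneg (Nat.cast_nonneg k : (0:ℝ) ≤ (k:ℝ)) (pow_nonneg (abs_nonneg y) (k-1))]
    refine this.trans ?_
    rw [hudef]
    exact (div_le_div_iff_of_pos_right h2).mpr key
  have hmem : x ∈ Ioo (-R) R := by
    constructor <;> cases abs_cases x <;> linarith
  have h0mem : (0:ℝ) ∈ Ioo (-R) R := by constructor <;> linarith
  have hsum0 : Summable fun k => g k 0 := summable_term hν 0
  have H := hasDerivAt_tsum_of_isPreconnected husum isOpen_Ioo (convex_Ioo (-R) R).isPreconnected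
    hderiv hbound h0mem hsum0 hmem
  have hsum' : Summable fun k => g' k x :=
    Summable.of_norm_bounded husum (fun k => hbound k x hmem)
  have hval : ∑' k, g' k x = -(besselJ1 (ν+1) x) / ν := by
    rw [Summable.tsum_eq_zero_add hsum']
    have h0 : g' 0 x = 0 := by simp [hg'def]
    rw [h0, zero_add]
    have hterm : ∀ j : ℕ, g' (j+1) x =
        (-(1/ν)) * ((-1 : ℝ) ^ j * x ^ j / (poch j (ν+1) * (j.factorial : ℝ))) := by
      intro j
      rw [hg'def]
      simp only [Nat.add_sub_cancel, Nat.factorial_succ, pow_succ, poch_succ_left]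
      have hp : (0:ℝ) < poch j (ν+1) := poch_pos (by linarith) j
      have hf : (0:ℝ) < (j.factorial : ℝ) := by positivity
      have hj1 : (0:ℝ) < ((j:ℝ)+1) := by positivity
      field_simp
      push_cast
      ring
    rw [tsum_congr hterm, tsum_mul_left, besselJ1_def']
    ring
  rw [← hval]
  exact H

lemma besselJ1_continuous {ν : ℝ} (hν : 1 ≤ ν) : Continuous (besselJ1 ν) :=
  continuous_iff_continuousAt.2 fun x =>
    (besselJ1_hasDerivAt hν x).differentiableAt.continuousAt

/-- The key contiguous recurrence: `x·J_{ν+2}(x) = ν(ν+1)(J_{ν+1}(x) − J_ν(x))`. -/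
lemma bessel_recur {ν : ℝ} (hν : 1 ≤ ν) (x : ℝ) :
    x * besselJ1 (ν+2) x = ν * (ν+1) * (besselJ1 (ν+1) x - besselJ1 ν x) := by
  have hν0 : (0:ℝ) < ν := lt_of_lt_of_le one_pos hν
  have hs1 : Summable (fun k : ℕ => (-1 : ℝ) ^ k * x ^ k / (poch k (ν+1) * (k.factorial : ℝ))) :=
    summable_term (by linarith) x
  have hs0 : Summable (fun k : ℕ => (-1 : ℝ) ^ k * x ^ k / (poch k ν * (k.factorial : ℝ))) :=
    summable_term hν x
  have hsub : besselJ1 (ν+1) x - besselJ1 ν x =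
      ∑' k : ℕ, ((-1 : ℝ) ^ k * x ^ k / (poch k (ν+1) * (k.factorial : ℝ))
        - (-1 : ℝ) ^ k * x ^ k / (poch k ν * (k.factorial : ℝ))) := by
    rw [besselJ1_def', besselJ1_def', ← Summable.tsum_sub hs1 hs0]
  rw [hsub, ← tsum_mul_left]
  have hsum : Summable (fun k : ℕ => ν * (ν+1) *
      ((-1 : ℝ) ^ k * x ^ k / (poch k (ν+1) * (k.factorial : ℝ))
        - (-1 : ℝ) ^ k * x ^ k / (poch k ν * (k.factorial : ℝ)))) :=
    ((hs1.sub hs0).mul_left _)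
  rw [Summable.tsum_eq_zero_add hsum]
  have h0 : ν * (ν+1) * ((-1 : ℝ) ^ 0 * x ^ 0 / (poch 0 (ν+1) * ((0:ℕ).factorial : ℝ))
      - (-1 : ℝ) ^ 0 * x ^ 0 / (poch 0 ν * ((0:ℕ).factorial : ℝ))) = 0 := by
    simp [poch_zero]
  rw [h0, zero_add]
  have hterm : ∀ j : ℕ, ν * (ν+1) *
      ((-1 : ℝ) ^ (j+1) * x ^ (j+1) / (poch (j+1) (ν+1) * ((j+1).factorial : ℝ))
        - (-1 : ℝ) ^ (j+1) * x ^ (j+1) / (poch (j+1) ν * ((j+1).factorial : ℝ)))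
      = x * ((-1 : ℝ) ^ j * x ^ j / (poch j (ν+2) * (j.factorial : ℝ))) := by
    intro j
    have hA : (0:ℝ) < poch j (ν+1) := poch_pos (by linarith) j
    have hB : (0:ℝ) < poch j (ν+2) := poch_pos (by linarith) j
    have hf : (0:ℝ) < (j.factorial : ℝ) := by positivity
    have e1 : poch (j+1) (ν+1) = (ν+1) * poch j (ν+2) := by
      rw [poch_succ_left]; ring_nf
    have e2 : poch (j+1) (ν+1) = poch j (ν+1) * (ν + 1 + j) := poch_succ_right j (ν+1)
    have e3 : poch (j+1) ν = ν * poch j (ν+1) := poch_succ_left j ν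
    have e4 : ((j+1).factorial : ℝ) = ((j:ℝ)+1) * (j.factorial : ℝ) := by
      rw [Nat.factorial_succ]; push_cast; ring
    have hA' : poch j (ν+1) = (ν+1) * poch j (ν+2) / (ν + 1 + j) := by
      have h : (0:ℝ) < ν + 1 + j := by positivity
      field_simp
      rw [← e2, e1]
    rw [pow_succ, pow_succ, e1, e3, e4, hA']
    have h5 : (0:ℝ) < ν + 1 + j := by positivity
    field_simp
    ring
  rw [tsum_congr hterm, tsum_mul_left, besselJ1_def']

lemma bessel_repr {ν : ℝ} (hν : 1 ≤ ν) (x : ℝ) :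
    besselJ1 ν x = Real.exp (-(x/ν)) *
      (1 - (1/(ν^2*(ν+1))) * ∫ t in (0:ℝ)..x, Real.exp (t/ν) * t * besselJ1 (ν+2) t) := by
  have hν0 : (0:ℝ) < ν := lt_of_lt_of_le one_pos hν
  have hν1 : (0:ℝ) < ν + 1 := by linarith
  set D : ℝ → ℝ := fun t => Real.exp (t/ν) * besselJ1 ν t with hDdef
  have hD : ∀ t : ℝ, HasDerivAt D
      (-(1/(ν^2*(ν+1))) * (Real.exp (t/ν) * t * besselJ1 (ν+2) t)) t := by
    intro t
    have he : HasDerivAt (fun s : ℝ => Real.exp (s/ν)) (Real.exp (t/ν) * (1/ν)) t :=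
      ((hasDerivAt_id t).div_const ν).exp
    have h := he.mul (besselJ1_hasDerivAt hν t)
    have hrec := bessel_recur hν t
    refine h.congr_deriv ?_
    field_simp
    linear_combination hrec
  have hcont : Continuous fun t => -(1/(ν^2*(ν+1))) * (Real.exp (t/ν) * t * besselJ1 (ν+2) t) := by
    have : Continuous (besselJ1 (ν+2)) := besselJ1_continuous (by linarith)
    continuity
  have hftc : ∫ t in (0:ℝ)..x, (-(1/(ν^2*(ν+1))) * (Real.exp (t/ν) * t * besselJ1 (ν+2) t))
      = D x - D 0 :=
    intervalIntegral.integral_eq_sub_of_hasDerivAt (fun t _ => hD t)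
      (hcont.intervalIntegrable 0 x)
  rw [intervalIntegral.integral_const_mul] at hftc
  have hD0 : D 0 = 1 := by simp [hDdef, besselJ1_zero]
  have hDx : D x = 1 - (1/(ν^2*(ν+1))) * ∫ t in (0:ℝ)..x, Real.exp (t/ν) * t * besselJ1 (ν+2) t := by
    rw [hD0] at hftc; linarith
  have : besselJ1 ν x = Real.exp (-(x/ν)) * D x := by
    rw [hDdef]
    simp only []
    rw [← mul_assoc, ← Real.exp_add]
    simp
  rw [this, hDx]

lemma bessel_est {ν : ℝ} (hν : 1 ≤ ν) {x : ℝ} (hx : 0 ≤ x) {M : ℝ} (hM0 : 0 ≤ M)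
    (hM : ∀ t ∈ Icc (0:ℝ) x, t * |besselJ1 (ν+2) t| ≤ M) :
    |besselJ1 ν x - Real.exp (-(x/ν))| ≤ M / (ν*(ν+1)) := by
  have hν0 : (0:ℝ) < ν := lt_of_lt_of_le one_pos hν
  have hν1 : (0:ℝ) < ν + 1 := by linarith
  have hrepr := bessel_repr hν x
  have hcont2 : Continuous (besselJ1 (ν+2)) := besselJ1_continuous (by linarith)
  have hcontI : Continuous fun t => Real.exp (t/ν) * t * besselJ1 (ν+2) t := by continuity
  have hintabs : |∫ t in (0:ℝ)..x, Real.exp (t/ν) * t * besselJ1 (ν+2) t|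
      ≤ M * (ν * (Real.exp (x/ν) - 1)) := by
    have h1 : |∫ t in (0:ℝ)..x, Real.exp (t/ν) * t * besselJ1 (ν+2) t|
        ≤ ∫ t in (0:ℝ)..x, |Real.exp (t/ν) * t * besselJ1 (ν+2) t| :=
      intervalIntegral.abs_integral_le_integral_abs hx
    have h2 : (∫ t in (0:ℝ)..x, |Real.exp (t/ν) * t * besselJ1 (ν+2) t|)
        ≤ ∫ t in (0:ℝ)..x, M * Real.exp (t/ν) := by
      apply intervalIntegral.integral_mono_on hx
      · exact hcontI.abs.intervalIntegrable 0 x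
      · exact (Continuous.intervalIntegrable (by continuity) 0 x)
      · intro t ht
        have h3 := hM t ht
        have hexp : (0:ℝ) < Real.exp (t/ν) := Real.exp_pos _
        have ht0 : 0 ≤ t := ht.1
        rw [abs_mul, abs_mul, abs_of_pos hexp, abs_of_nonneg ht0]
        calc Real.exp (t/ν) * t * |besselJ1 (ν+2) t| = Real.exp (t/ν) * (t * |besselJ1 (ν+2) t|) := by ring
          _ ≤ Real.exp (t/ν) * M := by
              exact mul_le_mul_of_nonneg_left h3 hexp.le
          _ = M * Real.exp (t/ν) := by ring
    have h4 : (∫ t in (0:ℝ)..x, M * Real.exp (t/ν)) = M * (ν * (Real.exp (x/ν) - 1)) := by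
      rw [intervalIntegral.integral_const_mul]
      congr 1
      have hanti : ∀ t ∈ Set.uIcc (0:ℝ) x, HasDerivAt (fun s => ν * Real.exp (s/ν)) (Real.exp (t/ν)) t := by
        intro t _
        have he : HasDerivAt (fun s : ℝ => Real.exp (s/ν)) (Real.exp (t/ν) * (1/ν)) t :=
          ((hasDerivAt_id t).div_const ν).exp
        have := he.const_mul ν
        refine this.congr_deriv ?_
        field_simp
      rw [intervalIntegral.integral_eq_sub_of_hasDerivAt hanti
        (Continuous.intervalIntegrable (by continuity) 0 x)]
      simp
      ring
    linarith
  have hrw : besselJ1 ν x - Real.exp (-(x/ν)) =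
      -(Real.exp (-(x/ν)) * ((1/(ν^2*(ν+1))) * ∫ t in (0:ℝ)..x, Real.exp (t/ν) * t * besselJ1 (ν+2) t)) := by
    rw [hrepr]; ring
  rw [hrw, abs_neg, abs_mul, abs_mul]
  have hexp1 : |Real.exp (-(x/ν))| = Real.exp (-(x/ν)) := abs_of_pos (Real.exp_pos _)
  have hc : |(1:ℝ)/(ν^2*(ν+1))| = 1/(ν^2*(ν+1)) := abs_of_pos (by positivity)
  rw [hexp1, hc]
  have hEE : Real.exp (-(x/ν)) * Real.exp (x/ν) = 1 := by
    rw [← Real.exp_add]; simp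
  calc Real.exp (-(x/ν)) * (1/(ν^2*(ν+1)) *
        |∫ t in (0:ℝ)..x, Real.exp (t/ν) * t * besselJ1 (ν+2) t|)
      ≤ Real.exp (-(x/ν)) * (1/(ν^2*(ν+1)) * (M * (ν * Real.exp (x/ν)))) := by
        have hstep : |∫ t in (0:ℝ)..x, Real.exp (t/ν) * t * besselJ1 (ν+2) t|
            ≤ M * (ν * Real.exp (x/ν)) := by
          refine hintabs.trans ?_
          have : Real.exp (x/ν) - 1 ≤ Real.exp (x/ν) := by linarith
          nlinarith [Real.exp_pos (x/ν)]
        gcongr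
    _ = M / (ν*(ν+1)) := by
        have hEE2 : Real.exp (-x/ν) * Real.exp (x/ν) = 1 := by
          rw [← Real.exp_add]; ring_nf; exact Real.exp_zero
        field_simp
        linear_combination M * hEE

noncomputable def energy (ν x : ℝ) : ℝ :=
  (besselJ1 ν x)^2 + x * (besselJ1 (ν+1) x / ν)^2

lemma energy_hasDerivAt {ν : ℝ} (hν : 1 ≤ ν) (x : ℝ) :
    HasDerivAt (energy ν)
      (2 * besselJ1 ν x ^ 1 * (-(besselJ1 (ν+1) x) / ν) +
        (1 * (besselJ1 (ν+1) x / ν)^2 +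
          x * (2 * (besselJ1 (ν+1) x / ν) ^ 1 * ((-(besselJ1 (ν+2) x) / (ν+1)) / ν)))) x := by
  have hJ := besselJ1_hasDerivAt hν x
  have hH := besselJ1_hasDerivAt (by linarith : (1:ℝ) ≤ ν+1) x
  have h := (hJ.pow 2).add ((hasDerivAt_id x).mul ((hH.div_const ν).pow 2))
  have e : ν + 1 + 1 = ν + 2 := by ring
  rw [e] at h
  refine h.congr_deriv ?_
  norm_num

lemma energy_deriv_nonpos {ν : ℝ} (hν : 1 ≤ ν) (x : ℝ) :
    deriv (energy ν) x ≤ 0 := by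
  have hν0 : (0:ℝ) < ν := lt_of_lt_of_le one_pos hν
  rw [(energy_hasDerivAt hν x).deriv]
  have hrec := bessel_recur hν x
  set J := besselJ1 ν x
  set H1 := besselJ1 (ν+1) x
  set H2 := besselJ1 (ν+2) x
  have key : 2 * J ^ 1 * (-H1 / ν) + (1 * (H1 / ν)^2 + x * (2 * (H1/ν)^1 * ((-H2/(ν+1))/ν)))
      = H1^2 * (1 - 2*ν) / ν^2 := by
    have hν1 : (0:ℝ) < ν + 1 := by linarith
    field_simp
    linear_combination (-2*H1) * hrec
  rw [key]
  have : H1^2 * (1-2*ν) ≤ 0 := mul_nonpos_of_nonneg_of_nonpos (sq_nonneg _) (by linarith)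
  exact div_nonpos_of_nonpos_of_nonneg this (by positivity)

lemma energy_antitone {ν : ℝ} (hν : 1 ≤ ν) : AntitoneOn (energy ν) (Ici 0) := by
  apply antitoneOn_of_deriv_nonpos (convex_Ici 0)
  · have h1 : Continuous (besselJ1 ν) := besselJ1_continuous hν
    have h2 : Continuous (besselJ1 (ν+1)) := besselJ1_continuous (by linarith)
    have : Continuous (energy ν) := by unfold energy; continuity
    exact this.continuousOn
  · intro x _
    exact (energy_hasDerivAt hν x).differentiableAt.differentiableWithinAt
  · intro x _
    exact energy_deriv_nonpos hν x

lemma energy_zero {ν : ℝ} : energy ν 0 = 1 := by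
  simp [energy, besselJ1_zero]

lemma energy_le_one {ν : ℝ} (hν : 1 ≤ ν) {x : ℝ} (hx : 0 ≤ x) : energy ν x ≤ 1 := by
  have := energy_antitone hν (self_mem_Ici) hx hx
  rwa [energy_zero] at this

lemma bessel_abs_le_one {ν : ℝ} (hν : 1 ≤ ν) {x : ℝ} (hx : 0 ≤ x) :
    |besselJ1 ν x| ≤ 1 := by
  rw [← sq_le_one_iff_abs_le_one]
  have h := energy_le_one hν hx
  have h2 : 0 ≤ x * (besselJ1 (ν+1) x / ν)^2 := by positivity
  rw [energy] at h
  linarith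

/-- First-order estimate: `|J_ν(x) − e^{−x/ν}| ≤ x/ν²`. -/
lemma est1 {ν : ℝ} (hν : 1 ≤ ν) {x : ℝ} (hx : 0 ≤ x) :
    |besselJ1 ν x - Real.exp (-(x/ν))| ≤ x / ν^2 := by
  have hν0 : (0:ℝ) < ν := lt_of_lt_of_le one_pos hν
  have h := bessel_est hν hx (M := x) hx ?_
  · refine h.trans ?_
    rw [div_le_div_iff₀ (by positivity) (by positivity)]
    nlinarith
  · intro t ht
    have h1 : |besselJ1 (ν+2) t| ≤ 1 := bessel_abs_le_one (by linarith) ht.1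
    have := ht.2
    nlinarith [ht.1]

/-- Bootstrapped estimate: `|J_ν(x) − e^{−x/ν}| ≤ 2/ν + x²/ν⁴` for `ν ≥ 2`. -/
lemma est2 {ν : ℝ} (hν : 2 ≤ ν) {x : ℝ} (hx : 0 ≤ x) :
    |besselJ1 ν x - Real.exp (-(x/ν))| ≤ 2/ν + x^2/ν^4 := by
  have hν0 : (0:ℝ) < ν := by linarith
  have hν1 : (1:ℝ) ≤ ν := by linarith
  have h := bessel_est hν1 hx (M := (ν+2) + x^2/(ν+2)^2) (by positivity) ?_
  · refine h.trans ?_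
    have e1 : (ν+2) / (ν*(ν+1)) ≤ 2/ν := by
      rw [div_le_div_iff₀ (by positivity) (by positivity)]
      nlinarith
    have e2 : (x^2/(ν+2)^2) / (ν*(ν+1)) ≤ x^2/ν^4 := by
      rw [div_div, div_le_div_iff₀ (by positivity) (by positivity)]
      have h4 : ν^4 ≤ (ν+2)^2*(ν*(ν+1)) := by
        have e : (ν+2)^2*(ν*(ν+1)) - ν^4 = 5*ν^3+8*ν^2+4*ν := by ring
        nlinarith [pow_pos hν0 3, pow_pos hν0 2]
      calc x^2 * ν^4 ≤ x^2 * ((ν+2)^2*(ν*(ν+1))) := by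
            exact mul_le_mul_of_nonneg_left h4 (sq_nonneg x)
        _ = x^2 * ((ν+2)^2*(ν*(ν+1))) := rfl
    calc ((ν+2) + x^2/(ν+2)^2) / (ν*(ν+1))
        = (ν+2)/(ν*(ν+1)) + (x^2/(ν+2)^2)/(ν*(ν+1)) := by ring
      _ ≤ 2/ν + x^2/ν^4 := add_le_add e1 e2
  · intro t ht
    have ht0 : 0 ≤ t := ht.1
    have htx : t ≤ x := ht.2
    have hJ2 : |besselJ1 (ν+2) t| ≤ Real.exp (-(t/(ν+2))) + t/(ν+2)^2 := by
      have h1 := est1 (by linarith : (1:ℝ) ≤ ν+2) ht0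
      have h2 : |besselJ1 (ν+2) t| - |Real.exp (-(t/(ν+2)))| ≤ t/(ν+2)^2 :=
        (abs_sub_abs_le_abs_sub _ _).trans h1
      rw [abs_of_pos (Real.exp_pos _)] at h2
      linarith
    have hue : t * Real.exp (-(t/(ν+2))) ≤ ν + 2 := by
      have hle := Real.add_one_le_exp (t/(ν+2))
      have hep : (0:ℝ) < Real.exp (t/(ν+2)) := Real.exp_pos _
      rw [Real.exp_neg]
      rw [mul_inv_le_iff₀ hep]
      have e : (ν+2)*(t/(ν+2)) = t := by field_simp
      nlinarith [mul_le_mul_of_nonneg_left hle (show (0:ℝ) ≤ ν+2 by linarith)]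
    calc t * |besselJ1 (ν+2) t| ≤ t * (Real.exp (-(t/(ν+2))) + t/(ν+2)^2) := by
          exact mul_le_mul_of_nonneg_left hJ2 ht0
      _ = t * Real.exp (-(t/(ν+2))) + t^2/(ν+2)^2 := by ring
      _ ≤ (ν+2) + x^2/(ν+2)^2 := by
          have : t^2 ≤ x^2 := by nlinarith
          have h3 : t^2/(ν+2)^2 ≤ x^2/(ν+2)^2 := by
            apply div_le_div_of_nonneg_right this ?_ |>.trans le_rfl
            positivity
          linarith

set_option maxHeartbeats 1600000 in
lemma key {ν : ℝ} (hν : 2 ≤ ν) {y : ℝ} (hy : 0 ≤ y) :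
    |besselJ1 ν (ν * y) - Real.exp (-y)| ≤ 60 / ν := by
  have hν0 : (0:ℝ) < ν := by linarith
  have hν1 : (1:ℝ) ≤ ν := by linarith
  have harg : ν * y / ν = y := by field_simp
  set L := Real.log ν with hLdef
  have hL2 : Real.log 2 ≤ L := Real.log_le_log (by norm_num) hν
  have hLhalf : (1:ℝ)/2 ≤ L := by
    have := Real.log_two_gt_d9
    linarith
  have hLpos : 0 < L := by linarith
  -- cube root facts
  set r := ν ^ ((1:ℝ)/3) with hrdef
  have hr1 : (1:ℝ) ≤ r := by
    have := Real.rpow_le_rpow_of_exponent_le hν1 (by norm_num : (0:ℝ) ≤ 1/3)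
    rwa [Real.rpow_zero] at this
  have hr0 : (0:ℝ) < r := by linarith
  have hlogr : Real.log r = (1/3) * L := Real.log_rpow hν0 _
  have hLr : L ≤ 3 * r := by
    have h1 : Real.log r ≤ r - 1 := Real.log_le_sub_one_of_pos hr0
    rw [hlogr] at h1
    linarith
  have hr3 : r^(3:ℕ) = ν := by
    rw [hrdef, ← Real.rpow_natCast (ν ^ ((1:ℝ)/3)) 3, ← Real.rpow_mul hν0.le]
    norm_num
  have hL3 : L^3 ≤ 27 * ν := by
    have h1 : L^3 ≤ (3*r)^3 := pow_le_pow_left₀ hLpos.le hLr 3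
    have : (3*r)^3 = 27 * r^(3:ℕ) := by ring
    rw [this, hr3] at h1
    exact h1
  have hL2ν : L^2 ≤ 9 * ν := by
    have h1 : L^2 ≤ (3*r)^2 := pow_le_pow_left₀ hLpos.le hLr 2
    have h2 : r^2 ≤ r^3 := pow_le_pow_right₀ hr1 (by norm_num)
    have h3 : (3*r)^2 = 9 * r^2 := by ring
    have : r^(3:ℕ) = r^3 := rfl
    nlinarith
  have hexpL : Real.exp (-L) = 1/ν := by
    rw [Real.exp_neg, Real.exp_log hν0]
    exact (one_div ν).symm
  have hexp2L : Real.exp (-(2*L)) = 1/ν^2 := by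
    have h1 : Real.exp (2*L) = ν^2 := by
      rw [two_mul, Real.exp_add, Real.exp_log hν0]; ring
    rw [Real.exp_neg, h1]
    exact (one_div _).symm
  rcases le_or_gt y (2*L) with hcase | hcase
  · -- moderate region: direct bootstrap estimate
    have h := est2 hν (x := ν*y) (by positivity)
    rw [harg] at h
    have e1 : (ν*y)^2/ν^4 = y^2/ν^2 := by field_simp
    rw [e1] at h
    have e2 : y^2/ν^2 ≤ 36/ν := by
      have hy2 : y^2 ≤ 4*L^2 := by nlinarith
      rw [div_le_div_iff₀ (by positivity) hν0]
      nlinarith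
    have e3 : 2/ν + 36/ν ≤ 60/ν := by
      rw [← add_div, div_le_div_iff₀ hν0 hν0]
      nlinarith
    linarith
  · -- tail region: energy decay
    set xs := ν * (2*L) with hxs
    have hxs0 : 0 ≤ xs := by positivity
    have hxsy : xs ≤ ν * y := by
      rw [hxs]
      exact mul_le_mul_of_nonneg_left hcase.le hν0.le
    -- bound on J ν at xs
    have ha : |besselJ1 ν xs| ≤ 39/ν := by
      have h := est2 hν (x := xs) hxs0
      have e1 : xs/ν = 2*L := by rw [hxs]; field_simp
      rw [e1, hexp2L] at h
      have e2 : xs^2/ν^4 = 4*L^2/ν^2 := by rw [hxs]; field_simp; ring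
      rw [e2] at h
      have e3 : 4*L^2/ν^2 ≤ 36/ν := by
        rw [div_le_div_iff₀ (by positivity) hν0]
        nlinarith
      have e4 : (1:ℝ)/ν^2 ≤ 1/ν := by
        rw [div_le_div_iff₀ (by positivity) hν0]
        nlinarith
      have h5 : |besselJ1 ν xs| - |(1:ℝ)/ν^2| ≤ 2/ν + 4*L^2/ν^2 :=
        (abs_sub_abs_le_abs_sub _ _).trans h
      have h6 : |(1:ℝ)/ν^2| = 1/ν^2 := abs_of_pos (by positivity)
      rw [h6] at h5
      have : 2/ν + 36/ν + 1/ν ≤ 39/ν := by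
        rw [← add_div, ← add_div]
        norm_num
      linarith
    -- bound on J (ν+1) at xs
    have hb : |besselJ1 (ν+1) xs| ≤ 4*L/ν := by
      have h := est1 (by linarith : (1:ℝ) ≤ ν+1) hxs0
      have h5 : |besselJ1 (ν+1) xs| - |Real.exp (-(xs/(ν+1)))| ≤ xs/(ν+1)^2 :=
        (abs_sub_abs_le_abs_sub _ _).trans h
      rw [abs_of_pos (Real.exp_pos _)] at h5
      have e1 : Real.exp (-(xs/(ν+1))) ≤ 1/ν := by
        rw [← hexpL]
        apply Real.exp_le_exp.mpr
        rw [neg_le_neg_iff, hxs, le_div_iff₀ (by linarith : (0:ℝ) < ν+1)]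
        nlinarith
      have e2 : xs/(ν+1)^2 ≤ 2*L/ν := by
        rw [hxs, div_le_div_iff₀ (by positivity) hν0]
        nlinarith
      have e3 : (1:ℝ)/ν + 2*L/ν ≤ 4*L/ν := by
        rw [← add_div, div_le_div_iff₀ hν0 hν0]
        nlinarith
      linarith
    -- energy comparison
    have hEmono := energy_antitone hν1 (show xs ∈ Ici (0:ℝ) from hxs0)
      (show ν*y ∈ Ici (0:ℝ) from mul_nonneg hν0.le hy) hxsy
    have hExs : energy ν xs ≤ 2500/ν^2 := by
      rw [energy]
      have h1 : (besselJ1 ν xs)^2 ≤ (39/ν)^2 := by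
        rw [← sq_abs]
        exact pow_le_pow_left₀ (abs_nonneg _) ha 2
      have h2 : (besselJ1 (ν+1) xs / ν)^2 ≤ (4*L/ν^2)^2 := by
        rw [← sq_abs, abs_div, abs_of_pos hν0]
        apply pow_le_pow_left₀ (by positivity) ?_ 2
        rw [div_le_div_iff₀ hν0 (by positivity)]
        calc |besselJ1 (ν+1) xs| * ν^2 ≤ (4*L/ν) * ν^2 :=
              mul_le_mul_of_nonneg_right hb (by positivity)
          _ = 4*L*ν := by field_simp
      have h3 : xs * (besselJ1 (ν+1) xs / ν)^2 ≤ (2*L*ν) * (4*L/ν^2)^2 := by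
        have hxe : xs = 2*L*ν := by rw [hxs]; ring
        rw [hxe] at h2 ⊢
        exact mul_le_mul_of_nonneg_left h2 (by positivity)
      have h4 : (2*L*ν) * (4*L/ν^2)^2 = 32*L^3/ν^3 := by field_simp; ring
      have h5 : 32*L^3/ν^3 ≤ 864/ν^2 := by
        rw [div_le_div_iff₀ (by positivity) (by positivity)]
        nlinarith
      have h6 : (39/ν)^2 = 1521/ν^2 := by field_simp; ring
      have h7 : (1521:ℝ)/ν^2 + 864/ν^2 ≤ 2500/ν^2 := by
        rw [← add_div, div_le_div_iff₀ (by positivity) (by positivity)]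
        nlinarith
      nlinarith
    have hJy2 : (besselJ1 ν (ν*y))^2 ≤ (50/ν)^2 := by
      have h1 : (besselJ1 ν (ν*y))^2 ≤ energy ν (ν*y) := by
        rw [energy]
        have : 0 ≤ (ν*y) * (besselJ1 (ν+1) (ν*y) / ν)^2 := by positivity
        linarith
      have h2 : (2500:ℝ)/ν^2 = (50/ν)^2 := by field_simp; ring
      linarith [hEmono, hExs, h2.le, h2.ge]
    have hJy : |besselJ1 ν (ν*y)| ≤ 50/ν := by
      have h0 : (0:ℝ) ≤ 50/ν := by positivity
      nlinarith [sq_abs (besselJ1 ν (ν*y)), abs_nonneg (besselJ1 ν (ν*y)), hJy2]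
    have hey : Real.exp (-y) ≤ 1/ν := by
      have h1 : Real.exp (-y) ≤ Real.exp (-(2*L)) :=
        Real.exp_le_exp.mpr (by linarith)
      rw [hexp2L] at h1
      have : (1:ℝ)/ν^2 ≤ 1/ν := by
        rw [div_le_div_iff₀ (by positivity) hν0]; nlinarith
      linarith
    have : |besselJ1 ν (ν*y) - Real.exp (-y)| ≤ |besselJ1 ν (ν*y)| + Real.exp (-y) := by
      have := abs_sub (besselJ1 ν (ν*y)) (Real.exp (-y))
      calc |besselJ1 ν (ν*y) - Real.exp (-y)| ≤ |besselJ1 ν (ν*y)| + |Real.exp (-y)| :=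
            abs_sub _ _
        _ = |besselJ1 ν (ν*y)| + Real.exp (-y) := by rw [abs_of_pos (Real.exp_pos _)]
    have hfin : (50:ℝ)/ν + 1/ν ≤ 60/ν := by
      rw [← add_div, div_le_div_iff₀ hν0 hν0]; nlinarith
    linarith

end BJ

/-- In the scalar case `q = 1`, `J_μ(μ y) → e^{−y}` as `μ → ∞`, uniformly
for `y ∈ [0,∞)`; moreover there is `C > 0` with `|J_μ(μy) − e^{−y}| ≤ C/μ` for all
`y ≥ 0` and `μ ≥ 2`. -/
theorem stmt12 :
    TendstoUniformlyOn (fun (μ : ℝ) (y : ℝ) => besselJ1 μ (μ * y))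
        (fun y => Real.exp (-y)) atTop (Set.Ici (0 : ℝ)) ∧
      ∃ C : ℝ, 0 < C ∧ ∀ μ : ℝ, 2 ≤ μ → ∀ y : ℝ, 0 ≤ y →
        |besselJ1 μ (μ * y) - Real.exp (-y)| ≤ C / μ := by
  constructor
  · rw [Metric.tendstoUniformlyOn_iff]
    intro ε hε
    filter_upwards [eventually_ge_atTop (max 2 (120/ε))] with μ hμ
    intro y hy
    have h2 : (2:ℝ) ≤ μ := le_trans (le_max_left _ _) hμ
    have h120 : 120/ε ≤ μ := le_trans (le_max_right _ _) hμ
    have hμ0 : (0:ℝ) < μ := by linarith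
    have hk := BJ.key h2 (hy : (0:ℝ) ≤ y)
    rw [Real.dist_eq, abs_sub_comm]
    refine lt_of_le_of_lt hk ?_
    rw [div_lt_iff₀ hμ0]
    have he : ε * (120/ε) = 120 := by field_simp
    nlinarith [mul_le_mul_of_nonneg_left h120 hε.le]
  · exact ⟨60, by norm_num, fun μ hμ y hy => BJ.key hμ hy⟩
end
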